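/- arXiv:0804.1489 — 4 statements merged into one kernel-verified Lean document; each statement's English description precedes it below -/
import Mathlib

section
/- Let Γ be a finite group and π = ℤ × ℤ (the fundamental group of the torus). Then the number of group homomorphisms from π to Γ equals |Γ| times the number of equivalence classes of irreducible complex representations of Γ. Equivalently, the number of pairs (a,b) ∈ Γ × Γ with ab = ba equals |Γ| times the number of conjugacy classes of Γ. -/
/-- An irreducible complex linear representation of a group `Γ`,
given by a positive dimension `n` and a homomorphism `Γ → GL_n(ℂ)`
(encoded as a `Representation` on `ℂ^n` by invertible maps) such that the only
invariant subspaces are `0` and the whole space. -/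
structure IrrRep (Γ : Type) [Group Γ] where
  n : ℕ
  npos : 0 < n
  ρ : Representation ℂ Γ (Fin n → ℂ)
  invertible : ∀ g : Γ, Function.Bijective (ρ g)
  irr : ∀ p : Submodule ℂ (Fin n → ℂ), (∀ g : Γ, ∀ x ∈ p, ρ g x ∈ p) → p = ⊥ ∨ p = ⊤

variable {Γ : Type} [Group Γ]

/-- Equivalence of representations: an intertwining linear isomorphism. -/
def IrrRep.equiv (A B : IrrRep Γ) : Prop :=
  ∃ e : (Fin A.n → ℂ) ≃ₗ[ℂ] (Fin B.n → ℂ), ∀ g v, e (A.ρ g v) = B.ρ g (e v)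

instance IrrRep.setoid (Γ : Type) [Group Γ] : Setoid (IrrRep Γ) where
  r := IrrRep.equiv
  iseqv := by
    constructor
    · intro A; exact ⟨LinearEquiv.refl ℂ _, fun g v => rfl⟩
    · rintro A B ⟨e, he⟩
      refine ⟨e.symm, fun g v => ?_⟩
      rw [LinearEquiv.symm_apply_eq, he, e.apply_symm_apply]
    · rintro A B C ⟨e, he⟩ ⟨f, hf⟩
      exact ⟨e.trans f, fun g v => by
        simp only [LinearEquiv.trans_apply, he, hf]⟩

/-- The set of equivalence classes of irreducible representations of `Γ`. -/
def IrrClass (Γ : Type) [Group Γ] := Quotient (IrrRep.setoid Γ)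

/-- The dimension of an equivalence class of irreducible representations. -/
def IrrClass.dim : IrrClass Γ → ℕ :=
  Quotient.lift (fun A => A.n) (by
    rintro A B ⟨e, -⟩
    have h := e.finrank_eq
    simpa using h)

section FrobeniusProof

open Module LinearMap

namespace IrrRep

variable {Γ : Type} [Group Γ]

/-- The character of an irreducible representation. -/
noncomputable def char (A : IrrRep Γ) (g : Γ) : ℂ :=
  LinearMap.trace ℂ (Fin A.n → ℂ) (A.ρ g)

lemma char_comm (A : IrrRep Γ) (g h : Γ) : A.char (h * g * h⁻¹) = A.char g := by
  unfold char
  rw [show h * g * h⁻¹ = h * (g * h⁻¹) by group, map_mul, trace_mul_comm, ← map_mul]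
  exact congrArg _ (congrArg _ (inv_mul_cancel_right g h))

lemma char_congr {A B : IrrRep Γ} (h : A.equiv B) : A.char = B.char := by
  obtain ⟨e, he⟩ := h
  funext g
  have hBA : B.ρ g = e.conj (A.ρ g) := by
    rw [LinearEquiv.conj_apply]
    ext v
    simp only [coe_comp, Function.comp_apply, LinearEquiv.coe_coe]
    rw [he, e.apply_symm_apply]
  rw [char, char, hBA, LinearMap.trace_conj']

lemma ρ_inv_apply (A : IrrRep Γ) (g : Γ) (x : Fin A.n → ℂ) :
    A.ρ g⁻¹ (A.ρ g x) = x := by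
  have h : A.ρ g⁻¹ * A.ρ g = 1 := by rw [← map_mul, inv_mul_cancel, map_one]
  calc A.ρ g⁻¹ (A.ρ g x) = (A.ρ g⁻¹ * A.ρ g) x := rfl
  _ = x := by rw [h]; rfl

lemma ρ_apply_inv (A : IrrRep Γ) (g : Γ) (x : Fin A.n → ℂ) :
    A.ρ g (A.ρ g⁻¹ x) = x := by
  have := A.ρ_inv_apply g⁻¹ x
  rwa [inv_inv] at this

lemma intertwiner_zero {A B : IrrRep Γ} (hAB : ¬ A.equiv B)
    (f : (Fin A.n → ℂ) →ₗ[ℂ] (Fin B.n → ℂ))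
    (hf : ∀ g : Γ, f ∘ₗ (A.ρ g) = (B.ρ g) ∘ₗ f) : f = 0 := by
  have hker : ∀ g : Γ, ∀ x ∈ LinearMap.ker f, A.ρ g x ∈ LinearMap.ker f := by
    intro g x hx
    rw [LinearMap.mem_ker] at hx ⊢
    have h1 := LinearMap.congr_fun (hf g) x
    simp only [coe_comp, Function.comp_apply] at h1
    rw [h1, hx, map_zero]
  rcases A.irr _ hker with h | h
  · have hrange : ∀ g : Γ, ∀ y ∈ LinearMap.range f, B.ρ g y ∈ LinearMap.range f := by
      rintro g _ ⟨x, rfl⟩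
      refine ⟨A.ρ g x, ?_⟩
      have h1 := LinearMap.congr_fun (hf g) x
      simpa using h1
    rcases B.irr _ hrange with h2 | h2
    · exact LinearMap.range_eq_bot.mp h2
    · exfalso
      apply hAB
      have hbij : Function.Bijective f :=
        ⟨LinearMap.ker_eq_bot.mp h, LinearMap.range_eq_top.mp h2⟩
      refine ⟨LinearEquiv.ofBijective f hbij, fun g v => ?_⟩
      simpa using LinearMap.congr_fun (hf g) v
  · exact LinearMap.ker_eq_top.mp h

lemma nontrivial_space (A : IrrRep Γ) : Nontrivial (Fin A.n → ℂ) := by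
  haveI : Nonempty (Fin A.n) := ⟨⟨0, A.npos⟩⟩
  infer_instance

lemma intertwiner_scalar (A : IrrRep Γ) (f : Module.End ℂ (Fin A.n → ℂ))
    (hf : ∀ g : Γ, f ∘ₗ (A.ρ g) = (A.ρ g) ∘ₗ f) : ∃ c : ℂ, f = c • LinearMap.id := by
  haveI := A.nontrivial_space
  obtain ⟨c, hc⟩ := Module.End.exists_eigenvalue f
  refine ⟨c, ?_⟩
  have hinv : ∀ g : Γ, ∀ x ∈ f.eigenspace c, A.ρ g x ∈ f.eigenspace c := by
    intro g x hx
    rw [Module.End.mem_eigenspace_iff] at hx ⊢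
    have h1 := LinearMap.congr_fun (hf g) x
    simp only [coe_comp, Function.comp_apply] at h1
    rw [h1, hx, map_smul]
  rcases A.irr _ hinv with h | h
  · exact absurd h hc
  · refine LinearMap.ext fun x => ?_
    have hx : x ∈ f.eigenspace c := h ▸ Submodule.mem_top
    rw [Module.End.mem_eigenspace_iff] at hx
    simpa using hx

lemma mem_invariants_linHom_iff (A B : IrrRep Γ)
    (f : (Fin A.n → ℂ) →ₗ[ℂ] (Fin B.n → ℂ)) :
    f ∈ (Representation.linHom A.ρ B.ρ).invariants ↔
      ∀ g : Γ, f ∘ₗ (A.ρ g) = (B.ρ g) ∘ₗ f := by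
  rw [Representation.mem_invariants]
  constructor
  · intro h g
    refine LinearMap.ext fun x => ?_
    have h1 := LinearMap.congr_fun (h g) (A.ρ g x)
    simp only [Representation.linHom_apply, coe_comp, Function.comp_apply] at h1
    rw [A.ρ_inv_apply] at h1
    simp only [coe_comp, Function.comp_apply]
    rw [← h1]
  · intro h g
    refine LinearMap.ext fun x => ?_
    simp only [Representation.linHom_apply, coe_comp, Function.comp_apply]
    have h1 := LinearMap.congr_fun (h g⁻¹) x
    simp only [coe_comp, Function.comp_apply] at h1
    rw [h1, B.ρ_apply_inv]

lemma coe_ne_zero {A B : IrrRep Γ} (e : (Fin A.n → ℂ) ≃ₗ[ℂ] (Fin B.n → ℂ)) :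
    (e : (Fin A.n → ℂ) →ₗ[ℂ] (Fin B.n → ℂ)) ≠ 0 := by
  haveI := A.nontrivial_space
  intro h0
  obtain ⟨x, hx⟩ := exists_ne (0 : Fin A.n → ℂ)
  apply hx
  apply e.injective
  rw [map_zero]
  exact LinearMap.congr_fun h0 x

lemma finrank_invariants_of_not_equiv {A B : IrrRep Γ} (h : ¬ A.equiv B) :
    finrank ℂ (Representation.linHom A.ρ B.ρ).invariants = 0 := by
  have hb : (Representation.linHom A.ρ B.ρ).invariants = ⊥ := by
    rw [eq_bot_iff]
    intro f hf
    rw [mem_invariants_linHom_iff] at hf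
    simp [intertwiner_zero h f hf]
  rw [hb]
  exact finrank_bot ℂ _

lemma finrank_invariants_of_equiv {A B : IrrRep Γ} (h : A.equiv B) :
    finrank ℂ (Representation.linHom A.ρ B.ρ).invariants = 1 := by
  obtain ⟨e, he⟩ := h
  have hs : (Representation.linHom A.ρ B.ρ).invariants =
      Submodule.span ℂ {(e : (Fin A.n → ℂ) →ₗ[ℂ] (Fin B.n → ℂ))} := by
    apply le_antisymm
    · intro f hf
      rw [mem_invariants_linHom_iff] at hf
      have hcomp : ∀ g : Γ, (f ∘ₗ (e.symm : (Fin B.n → ℂ) →ₗ[ℂ] (Fin A.n → ℂ))) ∘ₗ B.ρ g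
          = B.ρ g ∘ₗ (f ∘ₗ (e.symm : (Fin B.n → ℂ) →ₗ[ℂ] (Fin A.n → ℂ))) := by
        intro g
        refine LinearMap.ext fun v => ?_
        simp only [coe_comp, Function.comp_apply, LinearEquiv.coe_coe]
        have h1 : e.symm (B.ρ g v) = A.ρ g (e.symm v) := by
          apply e.injective
          rw [he, e.apply_symm_apply, e.apply_symm_apply]
        rw [h1]
        have h2 := LinearMap.congr_fun (hf g) (e.symm v)
        simpa using h2
      obtain ⟨c, hc⟩ := intertwiner_scalar B _ hcomp
      apply Submodule.mem_span_singleton.mpr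
      refine ⟨c, ?_⟩
      refine LinearMap.ext fun v => ?_
      have h3 := LinearMap.congr_fun hc (e v)
      simp only [coe_comp, Function.comp_apply, LinearEquiv.coe_coe,
        LinearEquiv.symm_apply_apply, LinearMap.smul_apply, id_apply, LinearMap.smul_apply] at h3 ⊢
      rw [h3]
    · rw [Submodule.span_le, Set.singleton_subset_iff, SetLike.mem_coe,
        mem_invariants_linHom_iff]
      intro g
      refine LinearMap.ext fun v => ?_
      simp only [coe_comp, Function.comp_apply, LinearEquiv.coe_coe]
      exact he g v
  rw [hs]
  exact finrank_span_singleton (coe_ne_zero e)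

end IrrRep

end FrobeniusProof
section Orth

open Module LinearMap

namespace IrrRep

variable {Γ : Type} [Group Γ] [Fintype Γ]

lemma char_of_eq (A : IrrRep Γ) (g : Γ) :
    (FDRep.of A.ρ).character g = A.char g := rfl

open scoped Classical in
lemma sum_char_orth (A B : IrrRep Γ) :
    ∑ g : Γ, A.char g⁻¹ * B.char g =
      if A.equiv B then (Fintype.card Γ : ℂ) else 0 := by
  haveI : Invertible ((Fintype.card Γ : ℂ)) :=
    invertibleOfNonzero (Nat.cast_ne_zero.mpr Fintype.card_ne_zero)
  have h := FDRep.average_char_eq_finrank_invariants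
    (FDRep.of (Representation.linHom A.ρ B.ρ))
  have hchar : ∀ g : Γ, (FDRep.of (Representation.linHom A.ρ B.ρ)).character g
      = A.char g⁻¹ * B.char g := by
    intro g
    have h2 := FDRep.char_linHom (FDRep.of A.ρ) (FDRep.of B.ρ) g
    simp only [FDRep.of_ρ, char_of_eq] at h2
    exact h2
  rw [Finset.sum_congr rfl (fun g _ => hchar g)] at h
  have h' : ⅟((Fintype.card Γ : ℂ)) • ∑ g : Γ, A.char g⁻¹ * B.char g
      = (finrank ℂ (Representation.linHom A.ρ B.ρ).invariants : ℂ) := by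
    rw [invOf_eq_inv, smul_eq_mul, Fintype.card_eq_nat_card]; exact h
  clear h
  have hS : ∑ g : Γ, A.char g⁻¹ * B.char g
      = (Fintype.card Γ : ℂ) *
        (finrank ℂ (Representation.linHom A.ρ B.ρ).invariants : ℂ) := by
    calc ∑ g : Γ, A.char g⁻¹ * B.char g
        = (Fintype.card Γ : ℂ) * (⅟((Fintype.card Γ : ℂ)) •
            ∑ g : Γ, A.char g⁻¹ * B.char g) := by
          rw [smul_eq_mul, ← mul_assoc, mul_invOf_self, one_mul]
      _ = _ := congrArg (fun t => (Fintype.card Γ : ℂ) * t) h'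
  rw [hS]
  by_cases hAB : A.equiv B
  · rw [if_pos hAB, finrank_invariants_of_equiv hAB]
    simp
  · rw [if_neg hAB, finrank_invariants_of_not_equiv hAB]
    simp

end IrrRep

end Orth
section SchurAvg

open Module LinearMap

namespace IrrRep

variable {Γ : Type} [Group Γ] [Fintype Γ]

lemma sum_smul_ρ_eq_zero (A : IrrRep Γ) (f : Γ → ℂ)
    (hcl : ∀ g h : Γ, f (h * g * h⁻¹) = f g)
    (h0 : ∑ g : Γ, f g * A.char g = 0) :
    ∑ g : Γ, f g • A.ρ g = 0 := by
  set T : Module.End ℂ (Fin A.n → ℂ) := ∑ g : Γ, f g • A.ρ g with hT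
  have hcomm : ∀ k : Γ, T ∘ₗ (A.ρ k) = (A.ρ k) ∘ₗ T := by
    intro k
    have h1 : T * A.ρ k = ∑ g : Γ, f g • A.ρ (g * k) := by
      rw [hT, Finset.sum_mul]
      exact Finset.sum_congr rfl fun g _ => by rw [smul_mul_assoc, ← map_mul]
    have h2 : A.ρ k * T = ∑ g : Γ, f g • A.ρ (k * g) := by
      rw [hT, Finset.mul_sum]
      exact Finset.sum_congr rfl fun g _ => by rw [mul_smul_comm, ← map_mul]
    have h3 : (∑ g : Γ, f g • A.ρ (g * k)) = ∑ g : Γ, f g • A.ρ (k * g) := by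
      apply Fintype.sum_equiv ⟨fun g => k⁻¹ * g * k, fun g => k * g * k⁻¹,
        fun g => by group, fun g => by group⟩
      intro g
      simp only [Equiv.coe_fn_mk]
      have hfg : f (k⁻¹ * g * k) = f g := by
        have := hcl g k⁻¹
        rwa [inv_inv] at this
      rw [hfg]
      congr 2
      group
    have : T * A.ρ k = A.ρ k * T := by rw [h1, h2, h3]
    exact this
  obtain ⟨c, hc⟩ := A.intertwiner_scalar T hcomm
  have htr : LinearMap.trace ℂ (Fin A.n → ℂ) T = ∑ g : Γ, f g * A.char g := by
    rw [hT, map_sum]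
    exact Finset.sum_congr rfl fun g _ => by rw [map_smul, smul_eq_mul]; rfl
  have htr2 : LinearMap.trace ℂ (Fin A.n → ℂ) T = c * A.n := by
    rw [hc, map_smul, LinearMap.trace_id, smul_eq_mul]
    congr 2
    simp [finrank_pi]
  have hc0 : c = 0 := by
    have hn : (A.n : ℂ) ≠ 0 := Nat.cast_ne_zero.mpr A.npos.ne'
    have := htr.symm.trans htr2
    rw [h0] at this
    exact (mul_eq_zero.mp this.symm).resolve_right hn
  rw [← hT] at *
  rw [hc, hc0, zero_smul]

end IrrRep

end SchurAvg
section Regular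

open Module LinearMap

variable {Γ : Type} [Group Γ] [Fintype Γ]

noncomputable instance : Module.Finite ℂ (MonoidAlgebra ℂ Γ) :=
  Module.Finite.equiv ((Finsupp.linearEquivFunOnFinite ℂ ℂ Γ).symm.trans (MonoidAlgebra.coeffLinearEquiv ℂ).symm)

/-- Left multiplication by `of g` on a left-ideal of the group algebra. -/
noncomputable def actW (W : Submodule (MonoidAlgebra ℂ Γ) (MonoidAlgebra ℂ Γ)) (g : Γ) :
    W →ₗ[ℂ] W where
  toFun w := ⟨MonoidAlgebra.of ℂ Γ g * (w : MonoidAlgebra ℂ Γ), by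
    simpa [smul_eq_mul] using W.smul_mem (MonoidAlgebra.of ℂ Γ g) w.2⟩
  map_add' w₁ w₂ := by ext; simp [mul_add]
  map_smul' c w := by ext; simp [Algebra.mul_smul_comm]

@[simp] lemma actW_apply (W : Submodule (MonoidAlgebra ℂ Γ) (MonoidAlgebra ℂ Γ)) (g : Γ)
    (w : W) : (actW W g w : MonoidAlgebra ℂ Γ) = MonoidAlgebra.of ℂ Γ g * w := rfl

/-- The representation of `Γ` on a left ideal of the group algebra. -/
noncomputable def repW (W : Submodule (MonoidAlgebra ℂ Γ) (MonoidAlgebra ℂ Γ)) :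
    Representation ℂ Γ W where
  toFun := actW W
  map_one' := by
    refine LinearMap.ext fun w => ?_
    ext
    simp
  map_mul' g h := by
    refine LinearMap.ext fun w => ?_
    ext
    simp [mul_assoc, Module.End.mul_apply]

lemma smul_coe_W (W : Submodule (MonoidAlgebra ℂ Γ) (MonoidAlgebra ℂ Γ))
    (m : MonoidAlgebra ℂ Γ) (w : W) : ((m • w : W) : MonoidAlgebra ℂ Γ) = m * w := rfl

/-- On a simple left ideal, multiplication by `∑ f g • of g` is zero, for a class
function `f` orthogonal to all irreducible characters. -/
lemma zmul_eq_zero_on_simple (f : Γ → ℂ)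
    (hcl : ∀ g h : Γ, f (h * g * h⁻¹) = f g)
    (horth : ∀ A : IrrRep Γ, ∑ g : Γ, f g * A.char g = 0)
    (W : Submodule (MonoidAlgebra ℂ Γ) (MonoidAlgebra ℂ Γ))
    (hW : IsSimpleModule (MonoidAlgebra ℂ Γ) W) (x : MonoidAlgebra ℂ Γ) (hx : x ∈ W) :
    (∑ g : Γ, f g • MonoidAlgebra.of ℂ Γ g) * x = 0 := by
  haveI : FiniteDimensional ℂ W :=
    (inferInstance : FiniteDimensional ℂ (W.restrictScalars ℂ))
  haveI := hW
  haveI : Nontrivial W := IsSimpleModule.nontrivial (MonoidAlgebra ℂ Γ) W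
  set n := finrank ℂ W with hn
  let e : W ≃ₗ[ℂ] (Fin n → ℂ) := (Module.finBasis ℂ W).equivFun
  let σ : Representation ℂ Γ W := repW W
  let ρ : Representation ℂ Γ (Fin n → ℂ) :=
  { toFun := fun g => e.conj (σ g)
    map_one' := by
      show e.conj (σ 1) = 1
      rw [map_one]
      refine LinearMap.ext fun v => ?_
      simp [LinearEquiv.conj_apply]
    map_mul' := fun g h => by
      show e.conj (σ (g * h)) = e.conj (σ g) * e.conj (σ h)
      rw [map_mul]
      refine LinearMap.ext fun v => ?_
      simp [LinearEquiv.conj_apply, Module.End.mul_apply] }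
  have hρ : ∀ g : Γ, ∀ w : W, ρ g (e w) = e (σ g w) := by
    intro g w
    simp [ρ, LinearEquiv.conj_apply]
  -- irreducibility
  have hirr : ∀ p : Submodule ℂ (Fin n → ℂ), (∀ g : Γ, ∀ v ∈ p, ρ g v ∈ p) →
      p = ⊥ ∨ p = ⊤ := by
    intro p hp
    let q : Submodule ℂ W := p.comap (e : W →ₗ[ℂ] (Fin n → ℂ))
    have hq : ∀ g : Γ, ∀ w ∈ q, σ g w ∈ q := by
      intro g w hw
      simp only [q, Submodule.mem_comap] at hw ⊢
      have : (e : W →ₗ[ℂ] (Fin n → ℂ)) (σ g w) = ρ g (e w) := (hρ g w).symm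
      rw [this]
      exact hp g _ hw
    -- build an `M`-submodule with the same carrier
    let Q : Submodule (MonoidAlgebra ℂ Γ) W :=
    { carrier := (q : Set W)
      add_mem' := fun ha hb => q.add_mem ha hb
      zero_mem' := q.zero_mem
      smul_mem' := by
        intro m w hw
        induction m using MonoidAlgebra.induction_on with
        | of g =>
          have : (MonoidAlgebra.of ℂ Γ g) • w = σ g w := by
            apply Subtype.ext
            rw [smul_coe_W]
            rfl
          rw [this]
          exact hq g w hw
        | add a b ha hb => rw [add_smul]; exact q.add_mem ha hb
        | smul r a ha =>
          have : (r • a) • w = r • (a • w) := smul_assoc r a w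
          rw [this]
          exact q.smul_mem r ha }
    have hQ : Q = ⊥ ∨ Q = ⊤ := eq_bot_or_eq_top Q
    rcases hQ with hQ | hQ
    · left
      rw [eq_bot_iff]
      intro v hv
      have hv' : e.symm v ∈ q := by
        simp only [q, Submodule.mem_comap]
        simpa using hv
      have : e.symm v ∈ Q := hv'
      rw [hQ] at this
      have h0 : e.symm v = 0 := this
      rw [Submodule.mem_bot]
      apply e.symm.injective
      simpa using h0
    · right
      rw [eq_top_iff]
      intro v _
      have : e.symm v ∈ Q := hQ ▸ Submodule.mem_top
      have hv' : e.symm v ∈ q := this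
      simp only [q, Submodule.mem_comap] at hv'
      simpa using hv'
  -- the bespoke irreducible representation
  have hnpos : 0 < n := finrank_pos
  let A : IrrRep Γ := ⟨n, hnpos, ρ, fun g => by
    rw [Function.bijective_iff_has_inverse]
    refine ⟨ρ g⁻¹, fun v => ?_, fun v => ?_⟩
    · have : ρ g⁻¹ * ρ g = 1 := by rw [← map_mul, inv_mul_cancel, map_one]
      calc ρ g⁻¹ (ρ g v) = (ρ g⁻¹ * ρ g) v := rfl
        _ = v := by rw [this]; rfl
    · have : ρ g * ρ g⁻¹ = 1 := by rw [← map_mul, mul_inv_cancel, map_one]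
      calc ρ g (ρ g⁻¹ v) = (ρ g * ρ g⁻¹) v := rfl
        _ = v := by rw [this]; rfl, hirr⟩
  -- characters agree
  have hchar : ∀ g : Γ, A.char g = LinearMap.trace ℂ W (σ g) := by
    intro g
    exact LinearMap.trace_conj' (σ g) e
  have h0 : ∑ g : Γ, f g * A.char g = 0 := horth A
  have hsum : ∑ g : Γ, f g • A.ρ g = 0 := A.sum_smul_ρ_eq_zero f hcl h0
  -- transport back to `σ`
  have hσ : ∑ g : Γ, f g • σ g = 0 := by
    have hconj : (e.conj : Module.End ℂ W →ₗ[ℂ] Module.End ℂ (Fin n → ℂ))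
        (∑ g : Γ, f g • σ g) = ∑ g : Γ, f g • A.ρ g := by
      rw [map_sum]
      exact Finset.sum_congr rfl fun g _ => by rw [map_smul]; rfl
    have h2 := hconj.trans hsum
    exact (LinearEquiv.map_eq_zero_iff e.conj).mp h2
  -- evaluate at ⟨x, hx⟩
  have hx2 := LinearMap.congr_fun hσ ⟨x, hx⟩
  have hx3 := congrArg (Subtype.val) hx2
  simp only [LinearMap.sum_apply, LinearMap.smul_apply, LinearMap.zero_apply,
    ZeroMemClass.coe_zero] at hx3
  rw [Finset.sum_mul]
  rw [AddSubmonoid.coe_finset_sum] at hx3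
  calc ∑ g : Γ, (f g • MonoidAlgebra.of ℂ Γ g) * x
      = ∑ g : Γ, ((f g • σ g ⟨x, hx⟩ : W) : MonoidAlgebra ℂ Γ) := by
        refine Finset.sum_congr rfl fun g _ => ?_
        rw [smul_mul_assoc]
        congr 1
    _ = 0 := hx3

end Regular
section ClassFun

open Module LinearMap

variable {Γ : Type} [Group Γ] [Fintype Γ]

/-- A class function orthogonal to all irreducible characters is zero. -/
lemma classfun_orth_eq_zero (f : Γ → ℂ)
    (hcl : ∀ g h : Γ, f (h * g * h⁻¹) = f g)
    (horth : ∀ A : IrrRep Γ, ∑ g : Γ, f g * A.char g = 0) : f = 0 := by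
  classical
  set M := MonoidAlgebra ℂ Γ
  set z : M := ∑ g : Γ, f g • MonoidAlgebra.of ℂ Γ g with hz
  -- z is central
  have hzg : ∀ k : Γ, z * MonoidAlgebra.of ℂ Γ k = MonoidAlgebra.of ℂ Γ k * z := by
    intro k
    rw [hz, Finset.sum_mul, Finset.mul_sum]
    apply Fintype.sum_equiv ⟨fun g => k⁻¹ * g * k, fun g => k * g * k⁻¹,
      fun g => by group, fun g => by group⟩
    intro g
    simp only [Equiv.coe_fn_mk]
    have hfg : f (k⁻¹ * g * k) = f g := by
      have := hcl g k⁻¹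
      rwa [inv_inv] at this
    rw [smul_mul_assoc, mul_smul_comm, ← map_mul, ← map_mul, hfg]
    congr 2
    group
  have hzc : ∀ m : M, z * m = m * z := by
    intro m
    induction m using MonoidAlgebra.induction_on with
    | of g => exact hzg g
    | add a b ha hb => rw [mul_add, add_mul, ha, hb]
    | smul r a ha => rw [mul_smul_comm, smul_mul_assoc, ha]
  -- left multiplication by z as an M-linear map
  let T : M →ₗ[M] M :=
  { toFun := fun x => z * x
    map_add' := mul_add z
    map_smul' := fun m x => by
      simp only [smul_eq_mul, RingHom.id_apply]
      rw [← mul_assoc, hzc m, mul_assoc] }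
  -- every simple submodule is in the kernel
  have hker : ∀ W ∈ {m : Submodule M M | IsSimpleModule M m}, W ≤ LinearMap.ker T := by
    intro W hW x hx
    rw [LinearMap.mem_ker]
    exact zmul_eq_zero_on_simple f hcl horth W hW x hx
  -- semisimplicity
  haveI : NeZero ((Fintype.card Γ : ℂ)) :=
    ⟨Nat.cast_ne_zero.mpr Fintype.card_ne_zero⟩
  have htop : sSup {m : Submodule M M | IsSimpleModule M m} = ⊤ :=
    IsSemisimpleModule.sSup_simples_eq_top M M
  have hkt : LinearMap.ker T = ⊤ := by
    rw [eq_top_iff, ← htop]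
    exact sSup_le hker
  have hz0 : z = 0 := by
    have h1 : (1 : M) ∈ LinearMap.ker T := hkt ▸ Submodule.mem_top
    rw [LinearMap.mem_ker] at h1
    have : z * 1 = 0 := h1
    rwa [mul_one] at this
  -- read off coefficients
  funext h
  have happ := congrArg (fun m : M => m.coeff h) hz0
  simp only [hz] at happ
  rw [show (0 : M).coeff h = 0 from rfl] at happ
  have hsum : (∑ g : Γ, f g • MonoidAlgebra.of ℂ Γ g).coeff h = f h := by
    rw [MonoidAlgebra.coeff_sum, Finsupp.finset_sum_apply]
    have : ∀ g : Γ, (f g • MonoidAlgebra.of ℂ Γ g).coeff h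
        = if g = h then f g else 0 := by
      intro g
      rw [show MonoidAlgebra.of ℂ Γ g = MonoidAlgebra.single g (1 : ℂ) from rfl]
      rw [show f g • MonoidAlgebra.single g (1 : ℂ)
        = MonoidAlgebra.single g (f g) by simp]
      exact MonoidAlgebra.single_apply
    rw [Finset.sum_congr rfl fun g _ => this g]
    simp
  rw [hsum] at happ
  exact happ

end ClassFun
section Count

open Module LinearMap

variable {Γ : Type} [Group Γ]

/-- The character of an equivalence class of irreducible representations. -/
noncomputable def classChar : IrrClass Γ → Γ → ℂ :=
  Quotient.lift IrrRep.char fun _ _ h => IrrRep.char_congr h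

lemma classChar_mk (A : IrrRep Γ) :
    classChar (Quotient.mk (IrrRep.setoid Γ) A) = A.char := rfl

lemma classChar_comm (i : IrrClass Γ) (g h : Γ) :
    classChar i (h * g * h⁻¹) = classChar i g :=
  Quotient.inductionOn i fun A => A.char_comm g h

/-- The descended character, as a function on conjugacy classes. -/
noncomputable def psi (i : IrrClass Γ) : ConjClasses Γ → ℂ :=
  Quotient.lift (classChar i) (by
    intro a b hab
    obtain ⟨c, hc⟩ := isConj_iff.mp hab
    rw [← hc]
    exact (classChar_comm i a c).symm)

lemma psi_mk (i : IrrClass Γ) (g : Γ) : psi i (ConjClasses.mk g) = classChar i g := rfl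

variable [Fintype Γ]

open scoped Classical in
lemma classChar_orth (i j : IrrClass Γ) :
    ∑ g : Γ, classChar i g⁻¹ * classChar j g =
      if i = j then (Fintype.card Γ : ℂ) else 0 := by
  refine Quotient.inductionOn₂ i j fun A B => ?_
  rw [classChar_mk, classChar_mk, IrrRep.sum_char_orth]
  by_cases h : A.equiv B
  · rw [if_pos h]; exact (if_pos (Quotient.sound h)).symm
  · rw [if_neg h]
    exact (if_neg (fun hq : (⟦A⟧ : Quotient (IrrRep.setoid Γ)) = ⟦B⟧ => h (Quotient.exact hq))).symm

lemma card_irrClass_eq (Γ : Type) [Group Γ] [Fintype Γ] [Fintype (IrrClass Γ)] :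
    Fintype.card (IrrClass Γ) = Nat.card (ConjClasses Γ) := by
  classical
  haveI : Finite (ConjClasses Γ) := Quotient.finite _
  haveI : Fintype (ConjClasses Γ) := Fintype.ofFinite _
  have hcard : (Fintype.card Γ : ℂ) ≠ 0 := Nat.cast_ne_zero.mpr Fintype.card_ne_zero
  -- the linear map sending coefficients to a combination of characters
  let θ₁ : (IrrClass Γ → ℂ) →ₗ[ℂ] (ConjClasses Γ → ℂ) :=
  { toFun := fun a c => ∑ i : IrrClass Γ, a i * psi i c
    map_add' := by intro a b; funext c; simp [add_mul, Finset.sum_add_distrib]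
    map_smul' := by intro r a; funext c; simp [Finset.mul_sum, mul_assoc] }
  have h₁ : Function.Injective θ₁ := by
    rw [injective_iff_map_eq_zero]
    intro a ha
    funext i₀
    have hg : ∀ g : Γ, (∑ i : IrrClass Γ, a i * classChar i g) = 0 := by
      intro g
      have := congrFun ha (ConjClasses.mk g)
      simpa [θ₁, psi_mk] using this
    have hE : ∑ i : IrrClass Γ, a i * ∑ g : Γ, classChar i₀ g⁻¹ * classChar i g = 0 := by
      calc ∑ i : IrrClass Γ, a i * ∑ g : Γ, classChar i₀ g⁻¹ * classChar i g
          = ∑ i : IrrClass Γ, ∑ g : Γ, classChar i₀ g⁻¹ * (a i * classChar i g) := by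
            refine Finset.sum_congr rfl fun i _ => ?_
            rw [Finset.mul_sum]
            exact Finset.sum_congr rfl fun g _ => by ring
        _ = ∑ g : Γ, ∑ i : IrrClass Γ, classChar i₀ g⁻¹ * (a i * classChar i g) :=
            Finset.sum_comm
        _ = ∑ g : Γ, classChar i₀ g⁻¹ * ∑ i : IrrClass Γ, a i * classChar i g := by
            refine Finset.sum_congr rfl fun g _ => ?_
            rw [Finset.mul_sum]
        _ = 0 := by
            refine Finset.sum_eq_zero fun g _ => ?_
            rw [hg g, mul_zero]
    rw [Finset.sum_congr rfl (fun i _ => by rw [classChar_orth i₀ i])] at hE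
    simp only [mul_ite, mul_zero] at hE
    rw [Finset.sum_ite_eq] at hE
    simp only [Finset.mem_univ, if_true] at hE
    exact (mul_eq_zero.mp hE).resolve_right hcard
  -- the linear map pairing a function on classes with each character
  let θ₂ : (ConjClasses Γ → ℂ) →ₗ[ℂ] (IrrClass Γ → ℂ) :=
  { toFun := fun u i => ∑ g : Γ, u (ConjClasses.mk g) * classChar i g
    map_add' := by intro a b; funext i; simp [add_mul, Finset.sum_add_distrib]
    map_smul' := by intro r a; funext i; simp [Finset.mul_sum, mul_assoc] }
  have h₂ : Function.Injective θ₂ := by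
    rw [injective_iff_map_eq_zero]
    intro u hu
    have hf : (fun g : Γ => u (ConjClasses.mk g)) = 0 := by
      apply classfun_orth_eq_zero
      · intro g h
        have : ConjClasses.mk (h * g * h⁻¹) = ConjClasses.mk g := by
          rw [ConjClasses.mk_eq_mk_iff_isConj]
          exact (isConj_iff.mpr ⟨h, rfl⟩).symm
        simp [this]
      · intro A
        have := congrFun hu (Quotient.mk (IrrRep.setoid Γ) A : IrrClass Γ)
        change _ = (0 : ℂ) at this
        simpa [θ₂, classChar_mk] using this
    funext c
    obtain ⟨g, rfl⟩ := ConjClasses.mk_surjective c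
    exact congrFun hf g
  have hle₁ : Fintype.card (IrrClass Γ) ≤ Fintype.card (ConjClasses Γ) := by
    have := LinearMap.finrank_le_finrank_of_injective h₁
    rwa [Module.finrank_pi, Module.finrank_pi] at this
  have hle₂ : Fintype.card (ConjClasses Γ) ≤ Fintype.card (IrrClass Γ) := by
    have := LinearMap.finrank_le_finrank_of_injective h₂
    rwa [Module.finrank_pi, Module.finrank_pi] at this
  rw [Nat.card_eq_fintype_card]
  exact le_antisymm hle₁ hle₂

end Count
section Final

/-- Homomorphisms from `ℤ × ℤ` correspond to commuting pairs. -/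
noncomputable def homCommEquiv (Γ : Type) [Group Γ] :
    (Multiplicative (ℤ × ℤ) →* Γ) ≃ {p : Γ × Γ // p.1 * p.2 = p.2 * p.1} where
  toFun φ := ⟨(φ (Multiplicative.ofAdd (1, 0)), φ (Multiplicative.ofAdd (0, 1))), by
    have hp : ((1 : ℤ), (0 : ℤ)) + ((0 : ℤ), (1 : ℤ)) = ((0 : ℤ), (1 : ℤ)) + ((1 : ℤ), (0 : ℤ)) := by
      simp [Prod.ext_iff]
    rw [← map_mul φ, ← map_mul φ, ← ofAdd_add, ← ofAdd_add, hp]⟩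
  invFun p :=
  { toFun := fun x => p.1.1 ^ (Multiplicative.toAdd x).1 * p.1.2 ^ (Multiplicative.toAdd x).2
    map_one' := by simp
    map_mul' := fun x y => by
      have hc : Commute p.1.1 p.1.2 := p.2
      simp only [toAdd_mul, Prod.fst_add, Prod.snd_add, zpow_add]
      exact (hc.zpow_zpow (Multiplicative.toAdd y).1 (Multiplicative.toAdd x).2).mul_mul_mul_comm
        _ _ }
  left_inv φ := by
    apply MonoidHom.ext
    intro x
    show φ (Multiplicative.ofAdd (1, 0)) ^ (Multiplicative.toAdd x).1 *
        φ (Multiplicative.ofAdd (0, 1)) ^ (Multiplicative.toAdd x).2 = φ x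
    rw [← map_zpow φ, ← map_zpow φ, ← map_mul φ]
    congr 1
    rw [← ofAdd_zsmul, ← ofAdd_zsmul, ← ofAdd_add]
    have hp : (Multiplicative.toAdd x).1 • ((1 : ℤ), (0 : ℤ))
        + (Multiplicative.toAdd x).2 • ((0 : ℤ), (1 : ℤ)) = Multiplicative.toAdd x := by
      simp [Prod.ext_iff]
    rw [hp]
    exact ofAdd_toAdd x
  right_inv p := by
    apply Subtype.ext
    apply Prod.ext <;> simp

end Final

/-- Frobenius' formula: the number of group homomorphisms from `ℤ × ℤ` (the fundamental
group of the torus) to a finite group `Γ` equals `|Γ|` times the number of equivalence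
classes of irreducible complex representations of `Γ`; equivalently, the number of
commuting pairs in `Γ` equals `|Γ|` times the number of conjugacy classes of `Γ`. -/
theorem frobenius_torus (Γ : Type) [Group Γ] [Fintype Γ] [Fintype (IrrClass Γ)] :
    Nat.card (Multiplicative (ℤ × ℤ) →* Γ) = Nat.card Γ * Fintype.card (IrrClass Γ) ∧
    Nat.card {p : Γ × Γ // p.1 * p.2 = p.2 * p.1} = Nat.card Γ * Nat.card (ConjClasses Γ) := by
  have h2 : Nat.card {p : Γ × Γ // p.1 * p.2 = p.2 * p.1}
      = Nat.card Γ * Nat.card (ConjClasses Γ) := by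
    have h := card_comm_eq_card_conjClasses_mul_card Γ
    rw [mul_comm] at h
    exact h
  refine ⟨?_, h2⟩
  rw [Nat.card_congr (homCommEquiv Γ), h2, card_irrClass_eq]
end

section
/- Let q : G' → G be a group epimorphism with kernel Γ. The number of one-dimensional representations ρ : Γ → ℂ* (Γ finite) whose stabilizer G_ρ equals G is |Γ / [Γ, G']|. -/
/-- Conjugation of an element of the kernel of `q : G' → G` by `a : G'`:
`h ↦ a⁻¹ h a`, which stays in the kernel since the kernel is normal. -/
def conjKer {G' G : Type} [Group G'] [Group G] (q : G' →* G) (a : G') (h : q.ker) :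
    q.ker :=
  ⟨a⁻¹ * (h : G') * a, by
    have hh : q (h : G') = 1 := h.2
    simp [MonoidHom.mem_ker, map_mul, map_inv, hh]⟩

/-- Let `q : G' → G` be a group epimorphism with finite kernel `Γ`. The number of
one-dimensional representations `ρ : Γ → ℂ*` whose stabilizer `G_ρ` equals all of `G`
is the order of the quotient `Γ/[Γ, G']`, where `[Γ, G']` is the subgroup generated by
commutators of elements of `Γ` with elements of `G'`. -/
theorem card_stable_characters {G' G : Type} [Group G'] [Group G]
    (q : G' →* G) (hq : Function.Surjective q) [Finite q.ker] :
    Nat.card {ρ : q.ker →* ℂˣ // ∀ (a : G') (h : q.ker), ρ (conjKer q a h) = ρ h} =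
      Nat.card (q.ker ⧸ (⁅q.ker, (⊤ : Subgroup G')⁆.subgroupOf q.ker)) := by
  set Γ : Subgroup G' := q.ker with hΓ
  set N : Subgroup Γ := ⁅q.ker, (⊤ : Subgroup G')⁆.subgroupOf q.ker with hNdef
  have hN : N.Normal := Subgroup.normal_subgroupOf
  -- characterize the invariance condition
  have key : ∀ ρ : Γ →* ℂˣ,
      (∀ (a : G') (h : Γ), ρ (conjKer q a h) = ρ h) ↔ N ≤ ρ.ker := by
    intro ρ
    constructor
    · intro hρ
      -- it suffices to handle generators
      intro x hx
      rw [Subgroup.mem_subgroupOf] at hx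
      -- consider the subgroup of G' of elements of Γ killed by ρ
      have hle : ⁅q.ker, (⊤ : Subgroup G')⁆ ≤ Subgroup.map Γ.subtype ρ.ker := by
        rw [Subgroup.commutator_le]
        intro g₁ hg₁ g₂ _
        refine ⟨⟨g₁, hg₁⟩ * conjKer q g₂⁻¹ ⟨g₁, hg₁⟩⁻¹, ?_, ?_⟩
        · have := hρ g₂⁻¹ (⟨g₁, hg₁⟩⁻¹)
          simp [MonoidHom.mem_ker, map_mul, this]
        · simp [conjKer, commutatorElement_def, mul_assoc]
      have := hle hx
      rcases this with ⟨y, hy, hyx⟩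
      have : y = x := Subtype.ext hyx
      rwa [← this]
    · intro hker a h
      have hmem : h⁻¹ * conjKer q a h ∈ N := by
        rw [Subgroup.mem_subgroupOf]
        open scoped commutatorElement in
        have : ((h⁻¹ * conjKer q a h : Γ) : G') = ⁅(h : G')⁻¹, a⁻¹⁆ := by
          simp [conjKer, commutatorElement_def, mul_assoc]
        rw [this]
        exact Subgroup.commutator_mem_commutator (Γ.inv_mem h.2) (Subgroup.mem_top _)
      have := hker hmem
      rw [MonoidHom.mem_ker, map_mul, map_inv] at this
      exact (inv_mul_eq_one.mp this).symm
  -- bijection with characters of the quotient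
  have e : {ρ : Γ →* ℂˣ // ∀ (a : G') (h : Γ), ρ (conjKer q a h) = ρ h} ≃
      ((Γ ⧸ N) →* ℂˣ) :=
    { toFun := fun ρ => QuotientGroup.lift N ρ.1 (fun x hx => (key ρ.1).mp ρ.2 hx)
      invFun := fun φ => ⟨φ.comp (QuotientGroup.mk' N), by
        rw [key]
        intro x hx
        have h1 : (QuotientGroup.mk' N) x = 1 := (QuotientGroup.eq_one_iff x).mpr hx
        simp only [MonoidHom.mem_ker, MonoidHom.comp_apply]
        rw [h1, map_one]⟩
      left_inv := fun ρ => by ext x; rfl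
      right_inv := fun φ => by
        ext x
        rfl }
  rw [Nat.card_congr e]
  -- the quotient is a finite commutative group
  letI : CommGroup (Γ ⧸ N) :=
    { (inferInstance : Group (Γ ⧸ N)) with
      mul_comm := by
        intro x y
        induction x using QuotientGroup.induction_on with | _ a =>
        induction y using QuotientGroup.induction_on with | _ b =>
        rw [← QuotientGroup.mk_mul, ← QuotientGroup.mk_mul, QuotientGroup.eq]
        rw [Subgroup.mem_subgroupOf]
        open scoped commutatorElement in
        have : (((a * b)⁻¹ * (b * a) : Γ) : G') = ⁅(b : G')⁻¹, (a : G')⁻¹⁆ := by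
          simp [commutatorElement_def, mul_assoc]
        rw [this]
        exact Subgroup.commutator_mem_commutator (Γ.inv_mem b.2) (Subgroup.mem_top _) }
  haveI : Finite (Γ ⧸ N) := Quotient.finite _
  haveI : NeZero ((Monoid.exponent (Γ ⧸ N) : ℂ)) :=
    ⟨by exact_mod_cast Monoid.exponent_ne_zero_of_finite⟩
  obtain ⟨e'⟩ := CommGroup.monoidHom_mulEquiv_of_hasEnoughRootsOfUnity (Γ ⧸ N) ℂ
  exact Nat.card_congr e'.toEquiv
end

section
/- Let G' = S₃ be the symmetric group on 3 letters, q : S₃ → ℤ/2ℤ the sign homomorphism (so Γ = Ker q ≅ ℤ/3ℤ), and let π be the group with m ≥ 1 generators x₁,…,x_m and defining relations x₁² = x₂² = ⋯ = x_m². Then the number of homomorphisms π → Γ equals 3, while the homomorphism g : π → ℤ/2ℤ sending each x_i to 1 (mod 2) admits at least 3^m lifts to S₃. -/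
/-- The relators `x_i² (x_j²)⁻¹` presenting the group with generators `x₁, …, x_m`
and relations `x₁² = x₂² = ⋯ = x_m²`. -/
def sqRels (m : ℕ) : Set (FreeGroup (Fin m)) :=
  {r | ∃ i j : Fin m, r = (FreeGroup.of i) ^ 2 * ((FreeGroup.of j) ^ 2)⁻¹}

namespace SqRelsAux

/-- The kernel of the sign homomorphism on `Perm (Fin 3)` has 3 elements. -/
lemma card_ker : Nat.card (Equiv.Perm.sign (α := Fin 3)).ker = 3 := by
  rw [show (Equiv.Perm.sign (α := Fin 3)).ker = alternatingGroup (Fin 3) from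
    (alternatingGroup_eq_sign_ker).symm, Nat.card_eq_fintype_card]
  have h := two_mul_card_alternatingGroup (α := Fin 3)
  have h2 : Fintype.card (Equiv.Perm (Fin 3)) = 6 := by
    rw [Fintype.card_perm]; rfl
  omega

lemma sq_injective : Function.Injective
    (fun x : (Equiv.Perm.sign (α := Fin 3)).ker => x ^ 2) := by
  intro x y h
  simp only at h
  have hx : x ^ 3 = 1 := by
    have := pow_card_eq_one' (x := x)
    rwa [card_ker] at this
  have hy : y ^ 3 = 1 := by
    have := pow_card_eq_one' (x := y)
    rwa [card_ker] at this
  calc x = (x ^ 2) ^ 2 := by rw [← pow_mul]; rw [show 2 * 2 = 3 + 1 from rfl, pow_succ, hx, one_mul]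
    _ = (y ^ 2) ^ 2 := by rw [h]
    _ = y := by rw [← pow_mul, show 2 * 2 = 3 + 1 from rfl, pow_succ, hy, one_mul]

/-- In the presented group, all generators have the same square. -/
lemma of_sq_eq (m : ℕ) (i j : Fin m) :
    (PresentedGroup.of (rels := sqRels m) i) ^ 2 = (PresentedGroup.of j) ^ 2 := by
  rw [← mul_inv_eq_one]
  have h : ((FreeGroup.of i) ^ 2 * ((FreeGroup.of j) ^ 2)⁻¹ : FreeGroup (Fin m)) ∈
      Subgroup.normalClosure (sqRels m) :=
    Subgroup.subset_normalClosure ⟨i, j, rfl⟩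
  have h1 : PresentedGroup.mk (sqRels m) ((FreeGroup.of i) ^ 2 * ((FreeGroup.of j) ^ 2)⁻¹) = 1 :=
    (QuotientGroup.eq_one_iff _).2 h
  simpa [PresentedGroup.of, map_mul, map_pow, map_inv] using h1

/-- The homomorphisms from the presented group to the kernel of sign are in bijection
with the kernel itself. -/
noncomputable def homEquiv (m : ℕ) (hm : 1 ≤ m) :
    (PresentedGroup (sqRels m) →* (Equiv.Perm.sign (α := Fin 3)).ker) ≃
      (Equiv.Perm.sign (α := Fin 3)).ker where
  toFun g := g (PresentedGroup.of ⟨0, hm⟩)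
  invFun γ := PresentedGroup.toGroup (f := fun _ : Fin m => γ) (by
    rintro r ⟨i, j, rfl⟩
    simp)
  left_inv g := by
    symm
    apply PresentedGroup.ext
    intro i
    rw [PresentedGroup.toGroup.of]
    apply sq_injective
    simp only [← map_pow]
    rw [of_sq_eq m i ⟨0, hm⟩]
  right_inv γ := PresentedGroup.toGroup.of _

/-- The three transpositions of `S₃`. -/
def t : Fin 3 → Equiv.Perm (Fin 3)
  | 0 => Equiv.swap 0 1
  | 1 => Equiv.swap 0 2
  | 2 => Equiv.swap 1 2

lemma t_sq (k : Fin 3) : t k ^ 2 = 1 := by fin_cases k <;> decide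

lemma t_sign (k : Fin 3) : Equiv.Perm.sign (t k) = -1 := by fin_cases k <;> decide

lemma t_inj : Function.Injective t := by decide

/-- A lift of `g` obtained by sending generator `i` to the transposition `t (v i)`. -/
noncomputable def liftHom (m : ℕ) (v : Fin m → Fin 3) :
    PresentedGroup (sqRels m) →* Equiv.Perm (Fin 3) :=
  PresentedGroup.toGroup (f := fun i => t (v i)) (by
    rintro r ⟨i, j, rfl⟩
    simp [t_sq])

lemma liftHom_of (m : ℕ) (v : Fin m → Fin 3) (i : Fin m) :
    liftHom m v (PresentedGroup.of i) = t (v i) :=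
  PresentedGroup.toGroup.of _

lemma finiteHoms (m : ℕ) : Finite (PresentedGroup (sqRels m) →* Equiv.Perm (Fin 3)) :=
  Finite.of_injective (fun g (i : Fin m) => g (PresentedGroup.of i))
    (fun _ _ h => PresentedGroup.ext fun i => congrFun h i)

end SqRelsAux

/-- Let `G' = S₃`, `q = sign : S₃ → {±1} ≅ ℤ/2ℤ`, with kernel `Γ = A₃ ≅ ℤ/3ℤ`, and
let `π` be the group with `m ≥ 1` generators `x₁, …, x_m` and relations
`x₁² = ⋯ = x_m²`. Then `|Hom(π, Γ)| = 3`, while the homomorphism `g : π → ℤ/2ℤ`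
sending each `x_i` to `1 (mod 2)` (i.e. to `-1 ∈ {±1}`) has at least `3^m` lifts
to `S₃`. -/
theorem sq_relations_example (m : ℕ) (hm : 1 ≤ m) :
    Nat.card (PresentedGroup (sqRels m) →* (Equiv.Perm.sign (α := Fin 3)).ker) = 3 ∧
    ∀ g : PresentedGroup (sqRels m) →* ℤˣ,
      (∀ i : Fin m, g (PresentedGroup.of i) = -1) →
      3 ^ m ≤ Nat.card {g' : PresentedGroup (sqRels m) →* Equiv.Perm (Fin 3) //
        (Equiv.Perm.sign).comp g' = g} := by
  constructor
  · rw [Nat.card_congr (SqRelsAux.homEquiv m hm)]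
    exact SqRelsAux.card_ker
  · intro g hg
    haveI := SqRelsAux.finiteHoms m
    set S := {g' : PresentedGroup (sqRels m) →* Equiv.Perm (Fin 3) //
        (Equiv.Perm.sign).comp g' = g}
    let Φ : (Fin m → Fin 3) → S := fun v =>
      ⟨SqRelsAux.liftHom m v, PresentedGroup.ext fun i => by
        simp [SqRelsAux.liftHom_of, SqRelsAux.t_sign, hg i]⟩
    have hΦ : Function.Injective Φ := by
      intro v w h
      funext i
      apply SqRelsAux.t_inj
      have := congrArg (fun g' : S => g'.1 (PresentedGroup.of i)) h
      simpa [Φ, SqRelsAux.liftHom_of] using this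
    calc 3 ^ m = Nat.card (Fin m → Fin 3) := by simp [Nat.card_eq_fintype_card]
      _ ≤ Nat.card S := Nat.card_le_card_of_injective Φ hΦ
end

section
/- Let q : G' → G be a group epimorphism with kernel Γ, let ρ : Γ → GL_n(ℂ) be an irreducible representation whose stabilizer G_ρ equals G, with associated cohomology class ζ_ρ ∈ H²(G; ℂ*) defined by choosing lifts α̃ ∈ q⁻¹(α) and matrices M_α with ρ(α̃⁻¹ h α̃) = M_α⁻¹ ρ(h) M_α, and cocycle ζ_{α,β} determined by ζ_{α,β} M_α M_β = M_{αβ} ρ((αβ)~⁻¹ α̃ β̃). Then n · q*(ζ_ρ) = 0 in H²(G'; ℂ*), i.e., the class ζ_ρ raised to the n-th power pulls back to the trivial class along q. -/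
/-- The kernel element `σ(αβ)⁻¹ σ(α) σ(β)` measuring the failure of a set-theoretic
section `σ` of `q` to be a homomorphism. -/
def sectKerElem {G' G : Type} [Group G'] [Group G] (q : G' →* G)
    (σ : G → G') (hσ : ∀ α : G, q (σ α) = α) (α β : G) : q.ker :=
  ⟨(σ (α * β))⁻¹ * σ α * σ β, by simp [MonoidHom.mem_ker, map_mul, map_inv, hσ]⟩


/-- For `a : G'`, the kernel element `σ(q a)⁻¹ * a`. -/
def liftKerElem {G' G : Type} [Group G'] [Group G] (q : G' →* G)
    (σ : G → G') (hσ : ∀ α : G, q (σ α) = α) (a : G') : q.ker :=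
  ⟨(σ (q a))⁻¹ * a, by simp [MonoidHom.mem_ker, map_mul, map_inv, hσ]⟩

/-- Let `q : G' → G` be an epimorphism with kernel `Γ`, and `ρ : Γ → GL_n(ℂ)` an
irreducible representation whose stabilizer is all of `G`: for chosen lifts
`σ(α) ∈ q⁻¹(α)` there are matrices `M_α` with `ρ(σ(α)⁻¹ h σ(α)) = M_α⁻¹ ρ(h) M_α`,
and the 2-cocycle `ζ` of the class `ζ_ρ ∈ H²(G;ℂ*)` is determined by
`ζ_{α,β} M_α M_β = M_{αβ} ρ(σ(αβ)⁻¹ σ(α) σ(β))`. Then `n · q*(ζ_ρ) = 0` in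
`H²(G';ℂ*)`: the `n`-th power of the pullback of `ζ` along `q` is a coboundary. -/
theorem n_mul_pullback_zeta_eq_zero {G' G : Type} [Group G'] [Group G] (n : ℕ)
    (q : G' →* G) (hq : Function.Surjective q)
    (ρ : q.ker →* GL (Fin n) ℂ)
    (hirr : ∀ p : Submodule ℂ (Fin n → ℂ),
      (∀ h : q.ker, ∀ x ∈ p, (ρ h : Matrix (Fin n) (Fin n) ℂ).mulVec x ∈ p) →
      p = ⊥ ∨ p = ⊤)
    (σ : G → G') (hσ : ∀ α : G, q (σ α) = α)
    (M : G → GL (Fin n) ℂ)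
    (hM : ∀ (α : G) (h : q.ker), ρ (conjKer q (σ α) h) = (M α)⁻¹ * ρ h * M α)
    (ζ : G → G → ℂˣ)
    (hζ : ∀ α β : G,
      (ζ α β : ℂ) • ((M α : Matrix (Fin n) (Fin n) ℂ) * (M β : Matrix (Fin n) (Fin n) ℂ))
        = (M (α * β) : Matrix (Fin n) (Fin n) ℂ)
            * (ρ (sectKerElem q σ hσ α β) : Matrix (Fin n) (Fin n) ℂ)) :
    ∃ f : G' → ℂˣ, ∀ a b : G',
      (ζ (q a) (q b)) ^ n = f a * f b * (f (a * b))⁻¹ := by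
  classical
  set D : GL (Fin n) ℂ →* ℂˣ := Matrix.GeneralLinearGroup.det with hD
  refine ⟨fun a => (D (M (q a)) * D (ρ (liftKerElem q σ hσ a)))⁻¹, fun a b => ?_⟩
  set α := q a
  set β := q b
  have hqab : q (a * b) = α * β := by simp [map_mul, α, β]
  -- kernel element identity
  have hker : liftKerElem q σ hσ (a * b)
      = sectKerElem q σ hσ α β * conjKer q (σ β) (liftKerElem q σ hσ a)
          * liftKerElem q σ hσ b := by
    apply Subtype.ext
    show (σ (q (a * b)))⁻¹ * (a * b) = _
    rw [hqab]
    simp only [sectKerElem, conjKer, liftKerElem, Submonoid.coe_mul, Subgroup.coe_mul]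
    rw [show q a = α from rfl, show q b = β from rfl]
    group
  -- determinant identity from hζ
  have eq1 : ((ζ α β : ℂ)) ^ n * (D (M α) : ℂ) * (D (M β) : ℂ)
      = (D (M (α * β)) : ℂ) * (D (ρ (sectKerElem q σ hσ α β)) : ℂ) := by
    have := congrArg Matrix.det (hζ α β)
    simpa [Matrix.det_smul, Matrix.det_mul, Fintype.card_fin, hD,
      Matrix.GeneralLinearGroup.val_det_apply, mul_assoc] using this
  -- det of conjugated kernel element
  have hconj : (D (ρ (conjKer q (σ β) (liftKerElem q σ hσ a))) : ℂˣ)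
      = D (ρ (liftKerElem q σ hσ a)) := by
    rw [hM β (liftKerElem q σ hσ a)]
    simp only [map_mul, map_inv]
    rw [mul_right_comm]; simp
  have eq2 : (D (ρ (liftKerElem q σ hσ (a * b))) : ℂ)
      = (D (ρ (sectKerElem q σ hσ α β)) : ℂ) * (D (ρ (liftKerElem q σ hσ a)) : ℂ)
          * (D (ρ (liftKerElem q σ hσ b)) : ℂ) := by
    rw [hker]
    simp only [map_mul, Units.val_mul, hconj]
  -- conclude
  apply Units.ext
  have hu : ∀ u : ℂˣ, (u : ℂ) ≠ 0 := fun u => u.ne_zero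
  simp only [Units.val_pow_eq_pow_val, Units.val_mul, Units.val_inv_eq_inv_val, hqab]
  field_simp
  linear_combination (D (ρ (liftKerElem q σ hσ a)) : ℂ)
      * (D (ρ (liftKerElem q σ hσ b)) : ℂ) * eq1
    - (D (M (α * β)) : ℂ) * eq2
end
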